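/- In the setting of the Walsh transport model (H = (ℂ⁴)^{⊗k}, U, Π's, t_n as above), let ε = (0, ε₂,...,ε_k) with ε_ℓ ∈ {1,2} for all 2 ≤ ℓ ≤ k (a nonclassical state). Then t_n|ε⟩ = 0 for all 1 ≤ n ≤ k-1, and for every 0 ≤ m ≤ k-1 one has ‖t_{k+m}|ε⟩‖² = 1/(4·2^m). -/

import Mathlib

open Complex

/-- the 4×4 discrete Fourier transform. -/
noncomputable def F4 : Matrix (Fin 4) (Fin 4) ℂ :=
  fun a b => (1 / 2 : ℂ) *
    Complex.exp (-(2 * Real.pi * Complex.I * ((a : ℕ) : ℂ) * ((b : ℕ) : ℂ)) / 4)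

/-- the identification of `ℂ^{4^k}` with `(ℂ⁴)^{⊗ k}`: the simple tensor
`v 0 ⊗ ⋯ ⊗ v (k-1)` corresponds to this vector. -/
noncomputable def tens4 (k : ℕ) (v : Fin k → Fin 4 → ℂ) : Fin (4 ^ k) → ℂ :=
  fun j => ∏ i : Fin k,
    v i ⟨j.val / 4 ^ (k - 1 - i.val) % 4, Nat.mod_lt _ (by norm_num)⟩

/-- the orthogonal projection onto the positions whose most significant base-4 digit
lies in `s` (acting only on the first qu4it). -/
noncomputable def projDigit (k : ℕ) (s : Finset (Fin 4)) :
    Matrix (Fin (4 ^ k)) (Fin (4 ^ k)) ℂ :=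
  Matrix.diagonal fun j =>
    if (⟨j.val / 4 ^ (k - 1) % 4, Nat.mod_lt _ (by norm_num)⟩ : Fin 4) ∈ s then 1 else 0

/-! ### auxiliary facts about `F4` -/

lemma F4_apply (a b : Fin 4) : F4 a b = (1/2 : ℂ) * (-I) ^ ((a:ℕ) * (b:ℕ)) := by
  have h : Complex.exp (-(2 * Real.pi * Complex.I * ((a:ℕ):ℂ) * ((b:ℕ):ℂ)) / 4)
      = Complex.exp ((-(Real.pi/2) : ℝ) * I) ^ ((a:ℕ)*(b:ℕ)) := by
    rw [← Complex.exp_nat_mul]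
    congr 1
    push_cast
    ring
  rw [F4, h]
  congr 1
  rw [Complex.exp_mul_I]
  simp [Real.cos_pi_div_two, Real.sin_pi_div_two]

lemma F4H_apply (a b : Fin 4) : F4.conjTranspose a b = (1/2 : ℂ) * I ^ ((a:ℕ) * (b:ℕ)) := by
  rw [Matrix.conjTranspose_apply, F4_apply, mul_comm (b:ℕ)]
  simp [map_pow]

noncomputable def fvec (j : Fin 4) : Fin 4 → ℂ := fun a => (1/2 : ℂ) * I ^ ((a:ℕ) * (j:ℕ))

noncomputable def gvec (j : Fin 4) : Fin 4 → ℂ :=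
  fun a => if a ∈ ({1, 2} : Finset (Fin 4)) then fvec j a else 0

lemma F4H_single (j : Fin 4) : F4.conjTranspose.mulVec (Pi.single j 1) = fvec j := by
  rw [Matrix.mulVec_single]
  funext a
  rw [MulOpposite.op_one, one_smul, Matrix.col_apply, F4H_apply]
  simp [fvec]

lemma abs_fvec (j a : Fin 4) : ‖fvec j a‖ = 1/2 := by
  simp [fvec, Complex.norm_I]

lemma sum_sq_single (j : Fin 4) : ∑ a : Fin 4, ‖(Pi.single j 1 : Fin 4 → ℂ) a‖ ^ 2 = 1 := by
  fin_cases j <;> simp [Fin.sum_univ_four, Pi.single_apply]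

lemma sum_sq_fvec (j : Fin 4) : ∑ a : Fin 4, ‖fvec j a‖ ^ 2 = 1 := by
  simp [abs_fvec, Fin.sum_univ_four]
  norm_num

lemma sum_sq_gvec (j : Fin 4) : ∑ a : Fin 4, ‖gvec j a‖ ^ 2 = 1/2 := by
  simp [gvec, Fin.sum_univ_four, abs_fvec]
  norm_num [abs_fvec]

lemma sum_sq_p3_fvec (j : Fin 4) :
    ∑ a : Fin 4, ‖(if a ∈ ({3} : Finset (Fin 4)) then fvec j a else 0)‖ ^ 2 = 1/4 := by
  simp [Fin.sum_univ_four, abs_fvec]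
  norm_num [abs_fvec]

lemma gvec0 (j : Fin 4) : gvec j 0 = 0 := if_neg (by decide)
lemma gvec1 (j : Fin 4) : gvec j 1 = fvec j 1 := if_pos (by decide)
lemma gvec2 (j : Fin 4) : gvec j 2 = fvec j 2 := if_pos (by decide)
lemma gvec3 (j : Fin 4) : gvec j 3 = 0 := if_neg (by decide)

lemma sum_sq_F4H_gvec (j : Fin 4) :
    ∑ a : Fin 4, ‖F4.conjTranspose.mulVec (gvec j) a‖ ^ 2 = 1/2 := by
  fin_cases j <;>
  · simp only [Matrix.mulVec, dotProduct, Fin.sum_univ_four, F4H_apply,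
      gvec0, gvec1, gvec2, gvec3, fvec,
      show ((3:Fin 4):ℕ) = 3 from rfl, show ((2:Fin 4):ℕ) = 2 from rfl,
      show ((1:Fin 4):ℕ) = 1 from rfl, show ((0:Fin 4):ℕ) = 0 from rfl]
    norm_num [Complex.sq_norm, Complex.norm_mul_self_eq_normSq, Complex.normSq_apply, pow_succ,
      Complex.mul_re, Complex.mul_im, Complex.add_re, Complex.add_im,
      Complex.I_re, Complex.I_im]

/-! ### norm factorization for simple tensors -/

lemma tens4_eq (k : ℕ) (v : Fin k → Fin 4 → ℂ) (j : Fin (4^k)) :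
    tens4 k v j = ∏ i : Fin k, v i (finFunctionFinEquiv.symm j i.rev) := by
  unfold tens4
  apply Finset.prod_congr rfl
  intro i _
  congr 1
  have h : (finFunctionFinEquiv.symm j i.rev : ℕ) = j.val / 4 ^ ((i.rev : ℕ)) % 4 := rfl
  rw [Fin.ext_iff, h, Fin.val_rev, show k - (↑i + 1) = k - 1 - ↑i by omega]

lemma sum_sq_tens4 (k : ℕ) (v : Fin k → Fin 4 → ℂ) :
    ∑ j : Fin (4^k), ‖tens4 k v j‖ ^ 2
      = ∏ i : Fin k, ∑ a : Fin 4, ‖v i a‖ ^ 2 := by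
  have step1 : ∀ j : Fin (4^k), ‖tens4 k v j‖ ^ 2
      = ∏ i : Fin k, ‖v i.rev (finFunctionFinEquiv.symm j i)‖ ^ 2 := by
    intro j
    rw [tens4_eq, Complex.norm_prod, ← Finset.prod_pow]
    rw [← Equiv.prod_comp Fin.revPerm
      (fun i => ‖v i.rev (finFunctionFinEquiv.symm j i)‖ ^ 2)]
    exact Finset.prod_congr rfl fun i _ => by simp
  simp_rw [step1]
  rw [Equiv.sum_comp finFunctionFinEquiv.symm
    (fun d => ∏ i : Fin k, ‖v i.rev (d i)‖ ^ 2)]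
  rw [show (∏ i : Fin k, ∑ a : Fin 4, ‖v i a‖ ^ 2)
      = ∏ i : Fin k, ∑ a : Fin 4, ‖v i.rev a‖ ^ 2 by
    rw [← Equiv.prod_comp Fin.revPerm (fun i => ∑ a : Fin 4, ‖v i a‖ ^ 2)]
    exact Finset.prod_congr rfl fun i _ => by simp]
  rw [Finset.prod_univ_sum]
  rw [Fintype.piFinset_univ]

/-! ### actions on simple tensors -/

noncomputable def projv (k : ℕ) (s : Finset (Fin 4)) (v : Fin k → Fin 4 → ℂ) :
    Fin k → Fin 4 → ℂ :=
  fun i => if (i:ℕ) = 0 then (fun a => if a ∈ s then v i a else 0) else v i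

noncomputable def shiftv (k : ℕ) (v : Fin k → Fin 4 → ℂ) : Fin k → Fin 4 → ℂ :=
  fun i => if h : (i:ℕ) + 1 < k then v ⟨(i:ℕ) + 1, h⟩
    else F4.conjTranspose.mulVec (v ⟨0, i.pos⟩)

lemma projDigit_mulVec (k : ℕ) (hk : 1 ≤ k) (s : Finset (Fin 4)) (v : Fin k → Fin 4 → ℂ) :
    (projDigit k s).mulVec (tens4 k v) = tens4 k (projv k s v) := by
  funext j
  rw [projDigit, Matrix.mulVec_diagonal]
  obtain ⟨k', rfl⟩ : ∃ k', k = k' + 1 := ⟨k - 1, by omega⟩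
  unfold tens4 projv
  rw [Fin.prod_univ_succ, Fin.prod_univ_succ]
  have hsucc : ∀ (i : Fin k'), ¬ ((i.succ : ℕ) = 0) := fun i => by simp
  simp only [Fin.val_zero, if_true, hsucc, if_false, if_neg]
  rw [← mul_assoc]
  congr 1
  simp only [Nat.sub_zero]
  by_cases h : (⟨j.val / 4 ^ (k' + 1 - 1) % 4, Nat.mod_lt _ (by norm_num)⟩ : Fin 4) ∈ s <;>
    simp [h]

lemma tens4_zero (k : ℕ) (hk : 0 < k) (v : Fin k → Fin 4 → ℂ) (h : v ⟨0, hk⟩ = 0) :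
    tens4 k v = 0 := by
  funext j
  unfold tens4
  apply Finset.prod_eq_zero (Finset.mem_univ (⟨0, hk⟩ : Fin k))
  rw [h]
  rfl

/-- the closed form for the state after `s` steps -/
noncomputable def wcl (k : ℕ) (hk : 0 < k) (εs : Fin k → Fin 4) (s : ℕ) :
    Fin k → Fin 4 → ℂ :=
  fun i =>
    if (i:ℕ) + s < k then Pi.single (εs ⟨((i:ℕ)+s) % k, Nat.mod_lt _ hk⟩) 1
    else if (i:ℕ) = 0 then gvec (εs ⟨((i:ℕ)+s) % k, Nat.mod_lt _ hk⟩)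
    else if (i:ℕ) + s < 2*k then fvec (εs ⟨((i:ℕ)+s) % k, Nat.mod_lt _ hk⟩)
    else F4.conjTranspose.mulVec (gvec (εs ⟨((i:ℕ)+s) % k, Nat.mod_lt _ hk⟩))

lemma proj12_single {ε : Fin 4} (h : ε = 1 ∨ ε = 2) :
    (fun a => if a ∈ ({1,2} : Finset (Fin 4)) then (Pi.single ε 1 : Fin 4 → ℂ) a else 0)
      = Pi.single ε 1 := by
  funext a
  by_cases ha : a ∈ ({1,2} : Finset (Fin 4))
  · rw [if_pos ha]
  · rw [if_neg ha, Pi.single_eq_of_ne]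
    intro hae
    rcases h with h | h <;> rw [hae, h] at ha <;> simp at ha

lemma proj3_single {ε : Fin 4} (h : ε = 1 ∨ ε = 2) :
    (fun a => if a ∈ ({3} : Finset (Fin 4)) then (Pi.single ε 1 : Fin 4 → ℂ) a else 0)
      = 0 := by
  funext a
  by_cases ha : a ∈ ({3} : Finset (Fin 4))
  · rw [if_pos ha]
    rw [Finset.mem_singleton] at ha
    subst ha
    rw [Pi.single_eq_of_ne]
    · rfl
    · rcases h with h | h <;> rw [h] <;> decide
  · rw [if_neg ha]
    rfl

lemma wcl_base (k : ℕ) (hk : 0 < k) (εs : Fin k → Fin 4) (hε0 : εs ⟨0, hk⟩ = 0) :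
    projv k {0} (fun i => Pi.single (εs i) 1) = wcl k hk εs 0 := by
  funext i
  simp only [projv, wcl]
  have hik : (i:ℕ) + 0 < k := by omega
  have hmod : (⟨((i:ℕ)+0) % k, Nat.mod_lt _ hk⟩ : Fin k) = i := by
    apply Fin.ext
    simpa using Nat.mod_eq_of_lt i.isLt
  rw [if_pos hik, hmod]
  by_cases h0 : (i:ℕ) = 0
  · rw [if_pos h0]
    have : i = ⟨0, hk⟩ := Fin.ext h0
    subst this
    rw [hε0]
    funext a
    by_cases ha : a ∈ ({0} : Finset (Fin 4))
    · rw [if_pos ha]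
    · rw [if_neg ha, Pi.single_eq_of_ne]
      intro hae
      rw [hae] at ha
      simp at ha
  · rw [if_neg h0]

lemma E_congr (k : ℕ) (hk : 0 < k) (εs : Fin k → Fin 4) {x y : ℕ} (h : x % k = y % k) :
    εs ⟨x % k, Nat.mod_lt _ hk⟩ = εs ⟨y % k, Nat.mod_lt _ hk⟩ := by
  congr 1
  exact Fin.ext h

lemma mk_mod_congr (k : ℕ) (hk : 0 < k) {x y : ℕ} (h : x = y) :
    (⟨x % k, Nat.mod_lt _ hk⟩ : Fin k) = ⟨y % k, Nat.mod_lt _ hk⟩ := by subst h; rfl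

lemma wcl_step (k : ℕ) (hk : 0 < k) (εs : Fin k → Fin 4)
    (hnc : ∀ ℓ : ℕ, 2 ≤ ℓ → ∀ h2 : ℓ ≤ k, εs ⟨ℓ - 1, by omega⟩ = 1 ∨ εs ⟨ℓ - 1, by omega⟩ = 2)
    (s : ℕ) (hs : s + 1 ≤ 2*k - 2) :
    projv k {1,2} (shiftv k (wcl k hk εs s)) = wcl k hk εs (s+1) := by
  have hk2 : 2 ≤ k := by omega
  funext i
  by_cases h0 : (i:ℕ) = 0
  · -- front slot: apply the projection
    have h1k : (0:ℕ) + 1 < k := by omega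
    have hsh : shiftv k (wcl k hk εs s) i = wcl k hk εs s ⟨1, by omega⟩ := by
      simp only [shiftv, h0, dif_pos h1k]
    have hL : projv k {1,2} (shiftv k (wcl k hk εs s)) i
        = fun a => if a ∈ ({1,2} : Finset (Fin 4)) then wcl k hk εs s ⟨1, by omega⟩ a else 0 := by
      simp only [projv, hsh]
      rw [if_pos h0]
    rw [hL]
    by_cases hlt : 1 + s < k
    · -- still in the first cycle
      have hw : wcl k hk εs s ⟨1, by omega⟩
          = Pi.single (εs ⟨(1+s) % k, Nat.mod_lt _ hk⟩) 1 := by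
        simp only [wcl]
        rw [if_pos (show (1:ℕ) + s < k from hlt)]
      rw [hw]
      have hval : εs ⟨(1+s) % k, Nat.mod_lt _ hk⟩ = 1 ∨ εs ⟨(1+s) % k, Nat.mod_lt _ hk⟩ = 2 := by
        have h := hnc (s+2) (by omega) (by omega)
        have he : (⟨(1+s) % k, Nat.mod_lt _ hk⟩ : Fin k) = ⟨s+2-1, by omega⟩ := by
          apply Fin.ext
          show (1+s) % k = s+2-1
          rw [Nat.mod_eq_of_lt hlt]
          omega
        rw [he]
        exact h
      rw [proj12_single hval]
      simp only [wcl]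
      rw [if_pos (show (i:ℕ) + (s+1) < k by omega)]
      rw [show (⟨(1+s) % k, Nat.mod_lt _ hk⟩ : Fin k)
        = ⟨((i:ℕ)+(s+1)) % k, Nat.mod_lt _ hk⟩ from mk_mod_congr k hk (by omega)]
    · -- second cycle: slot 1 holds `fvec`, project it to `gvec`
      have hw : wcl k hk εs s ⟨1, by omega⟩ = fvec (εs ⟨(1+s) % k, Nat.mod_lt _ hk⟩) := by
        simp only [wcl]
        rw [if_neg (show ¬((1:ℕ) + s < k) from hlt), if_neg (show ¬((1:ℕ) = 0) by omega),
          if_pos (show (1:ℕ) + s < 2*k by omega)]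
      rw [hw]
      have hg : (fun a => if a ∈ ({1,2} : Finset (Fin 4))
          then fvec (εs ⟨(1+s) % k, Nat.mod_lt _ hk⟩) a else 0)
          = gvec (εs ⟨(1+s) % k, Nat.mod_lt _ hk⟩) := rfl
      rw [hg]
      simp only [wcl]
      rw [if_neg (show ¬ ((i:ℕ) + (s+1) < k) by omega), if_pos h0]
      rw [show (⟨(1+s) % k, Nat.mod_lt _ hk⟩ : Fin k)
        = ⟨((i:ℕ)+(s+1)) % k, Nat.mod_lt _ hk⟩ from mk_mod_congr k hk (by omega)]
  · -- not the front slot: no projection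
    have hL : projv k {1,2} (shiftv k (wcl k hk εs s)) i = shiftv k (wcl k hk εs s) i := by
      simp only [projv, if_neg h0]
    rw [hL]
    by_cases hlt : (i:ℕ) + 1 < k
    · -- inner slot: simply shifts
      have hsh : shiftv k (wcl k hk εs s) i = wcl k hk εs s ⟨(i:ℕ)+1, hlt⟩ := by
        simp only [shiftv, dif_pos hlt]
      rw [hsh]
      simp only [wcl]
      by_cases c1 : (i:ℕ) + 1 + s < k
      · rw [if_pos (show (i:ℕ) + 1 + s < k from c1), if_pos (show (i:ℕ) + (s+1) < k by omega)]
        rw [show (⟨((i:ℕ)+1+s) % k, Nat.mod_lt _ hk⟩ : Fin k)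
          = ⟨((i:ℕ)+(s+1)) % k, Nat.mod_lt _ hk⟩ from mk_mod_congr k hk (by omega)]
      · rw [if_neg (show ¬((i:ℕ) + 1 + s < k) from c1),
          if_neg (show ¬((i:ℕ) + (s+1) < k) by omega),
          if_neg (show ¬((i:ℕ) + 1 = 0) by omega), if_neg h0]
        by_cases c2 : (i:ℕ) + 1 + s < 2*k
        · rw [if_pos (show (i:ℕ) + 1 + s < 2*k from c2),
            if_pos (show (i:ℕ) + (s+1) < 2*k by omega)]
          rw [show (⟨((i:ℕ)+1+s) % k, Nat.mod_lt _ hk⟩ : Fin k)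
            = ⟨((i:ℕ)+(s+1)) % k, Nat.mod_lt _ hk⟩ from mk_mod_congr k hk (by omega)]
        · rw [if_neg (show ¬((i:ℕ) + 1 + s < 2*k) from c2),
            if_neg (show ¬((i:ℕ) + (s+1) < 2*k) by omega)]
          rw [show (⟨((i:ℕ)+1+s) % k, Nat.mod_lt _ hk⟩ : Fin k)
            = ⟨((i:ℕ)+(s+1)) % k, Nat.mod_lt _ hk⟩ from mk_mod_congr k hk (by omega)]
    · -- last slot: gets the Fourier transform of slot 0
      have hsh : shiftv k (wcl k hk εs s) i
          = F4.conjTranspose.mulVec (wcl k hk εs s ⟨0, hk⟩) := by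
        simp only [shiftv, dif_neg hlt]
      rw [hsh]
      by_cases hsk : s < k
      · have hw : wcl k hk εs s ⟨0, hk⟩ = Pi.single (εs ⟨(0+s) % k, Nat.mod_lt _ hk⟩) 1 := by
          simp only [wcl]
          rw [if_pos (show (0:ℕ) + s < k by omega)]
        rw [hw, F4H_single]
        simp only [wcl]
        rw [if_neg (show ¬((i:ℕ) + (s+1) < k) by omega), if_neg h0,
          if_pos (show (i:ℕ) + (s+1) < 2*k by omega)]
        rw [show (⟨((0:ℕ)+s) % k, Nat.mod_lt _ hk⟩ : Fin k)
          = ⟨((i:ℕ)+(s+1)) % k, Nat.mod_lt _ hk⟩ from Fin.ext (by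
            show (0+s) % k = ((i:ℕ)+(s+1)) % k
            rw [show (i:ℕ) + (s+1) = k + s by omega, Nat.add_mod_left]
            congr 1
            omega)]
      · have hw : wcl k hk εs s ⟨0, hk⟩ = gvec (εs ⟨(0+s) % k, Nat.mod_lt _ hk⟩) := by
          simp only [wcl]
          rw [if_neg (show ¬((0:ℕ) + s < k) by omega), if_pos trivial]
        rw [hw]
        simp only [wcl]
        rw [if_neg (show ¬((i:ℕ) + (s+1) < k) by omega), if_neg h0,
          if_neg (show ¬((i:ℕ) + (s+1) < 2*k) by omega)]
        rw [show (⟨((0:ℕ)+s) % k, Nat.mod_lt _ hk⟩ : Fin k)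
          = ⟨((i:ℕ)+(s+1)) % k, Nat.mod_lt _ hk⟩ from Fin.ext (by
            show (0+s) % k = ((i:ℕ)+(s+1)) % k
            rw [show (i:ℕ) + (s+1) = k + s by omega, Nat.add_mod_left]
            congr 1
            omega)]

/-- the final state for `t_{k+m}` -/
noncomputable def wfin (k : ℕ) (hk : 0 < k) (εs : Fin k → Fin 4) (m : ℕ) :
    Fin k → Fin 4 → ℂ :=
  fun i =>
    if (i:ℕ) = 0 then
      (fun a => if a ∈ ({3} : Finset (Fin 4)) then fvec (εs ⟨m % k, Nat.mod_lt _ hk⟩) a else 0)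
    else if (i:ℕ) + m < k then fvec (εs ⟨((i:ℕ)+m) % k, Nat.mod_lt _ hk⟩)
    else F4.conjTranspose.mulVec (gvec (εs ⟨((i:ℕ)+m) % k, Nat.mod_lt _ hk⟩))

lemma wfin_eq (k : ℕ) (hk : 0 < k) (εs : Fin k → Fin 4) (m : ℕ) (hm : m ≤ k - 1) :
    projv k {3} (shiftv k (wcl k hk εs (k+m-1))) = wfin k hk εs m := by
  funext i
  by_cases h0 : (i:ℕ) = 0
  · by_cases hk2 : 1 + 1 ≤ k
    · -- k ≥ 2
      have h1k : (0:ℕ) + 1 < k := by omega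
      have hsh : shiftv k (wcl k hk εs (k+m-1)) i = wcl k hk εs (k+m-1) ⟨1, by omega⟩ := by
        simp only [shiftv, h0, dif_pos h1k]
      have hw : wcl k hk εs (k+m-1) ⟨1, by omega⟩
          = fvec (εs ⟨(1+(k+m-1)) % k, Nat.mod_lt _ hk⟩) := by
        simp only [wcl]
        rw [if_neg (show ¬((1:ℕ) + (k+m-1) < k) by omega), if_neg (show ¬((1:ℕ) = 0) by omega),
          if_pos (show (1:ℕ) + (k+m-1) < 2*k by omega)]
      simp only [projv, wfin, h0]
      rw [if_pos trivial, if_pos trivial, hsh, hw]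
      rw [show (⟨(1+(k+m-1)) % k, Nat.mod_lt _ hk⟩ : Fin k)
        = ⟨m % k, Nat.mod_lt _ hk⟩ from Fin.ext (by
          show (1+(k+m-1)) % k = m % k
          rw [show 1+(k+m-1) = k + m by omega, Nat.add_mod_left])]
    · -- k = 1, m = 0
      have hk1 : k = 1 := by omega
      have hm0 : m = 0 := by omega
      have hsh : shiftv k (wcl k hk εs (k+m-1)) i
          = F4.conjTranspose.mulVec (wcl k hk εs (k+m-1) ⟨0, hk⟩) := by
        simp only [shiftv, dif_neg (show ¬((i:ℕ) + 1 < k) by omega)]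
      have hw : wcl k hk εs (k+m-1) ⟨0, hk⟩
          = Pi.single (εs ⟨(0+(k+m-1)) % k, Nat.mod_lt _ hk⟩) 1 := by
        simp only [wcl]
        rw [if_pos (show (0:ℕ) + (k+m-1) < k by omega)]
      simp only [projv, wfin, h0]
      rw [if_pos trivial, if_pos trivial, hsh, hw, F4H_single]
      rw [show (⟨(0+(k+m-1)) % k, Nat.mod_lt _ hk⟩ : Fin k)
        = ⟨m % k, Nat.mod_lt _ hk⟩ from mk_mod_congr k hk (by omega)]
  · have hL : projv k {3} (shiftv k (wcl k hk εs (k+m-1))) i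
        = shiftv k (wcl k hk εs (k+m-1)) i := by
      simp only [projv, if_neg h0]
    rw [hL]
    by_cases hlt : (i:ℕ) + 1 < k
    · have hsh : shiftv k (wcl k hk εs (k+m-1)) i
          = wcl k hk εs (k+m-1) ⟨(i:ℕ)+1, hlt⟩ := by
        simp only [shiftv, dif_pos hlt]
      rw [hsh]
      simp only [wcl, wfin]
      rw [if_neg (show ¬((i:ℕ) + 1 + (k+m-1) < k) by omega),
        if_neg (show ¬((i:ℕ) + 1 = 0) by omega), if_neg h0]
      by_cases c : (i:ℕ) + m < k
      · rw [if_pos (show (i:ℕ) + 1 + (k+m-1) < 2*k by omega), if_pos c]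
        rw [show (⟨((i:ℕ)+1+(k+m-1)) % k, Nat.mod_lt _ hk⟩ : Fin k)
          = ⟨((i:ℕ)+m) % k, Nat.mod_lt _ hk⟩ from Fin.ext (by
            show ((i:ℕ)+1+(k+m-1)) % k = ((i:ℕ)+m) % k
            rw [show (i:ℕ)+1+(k+m-1) = k + ((i:ℕ)+m) by omega, Nat.add_mod_left])]
      · rw [if_neg (show ¬((i:ℕ) + 1 + (k+m-1) < 2*k) by omega), if_neg c]
        rw [show (⟨((i:ℕ)+1+(k+m-1)) % k, Nat.mod_lt _ hk⟩ : Fin k)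
          = ⟨((i:ℕ)+m) % k, Nat.mod_lt _ hk⟩ from Fin.ext (by
            show ((i:ℕ)+1+(k+m-1)) % k = ((i:ℕ)+m) % k
            rw [show (i:ℕ)+1+(k+m-1) = k + ((i:ℕ)+m) by omega, Nat.add_mod_left])]
    · -- i = k - 1
      have hik : (i:ℕ) = k - 1 := by have := i.isLt; omega
      have hk2 : 2 ≤ k := by omega
      have hsh : shiftv k (wcl k hk εs (k+m-1)) i
          = F4.conjTranspose.mulVec (wcl k hk εs (k+m-1) ⟨0, hk⟩) := by
        simp only [shiftv, dif_neg hlt]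
      rw [hsh]
      by_cases hm0 : m = 0
      · have hw : wcl k hk εs (k+m-1) ⟨0, hk⟩
            = Pi.single (εs ⟨(0+(k+m-1)) % k, Nat.mod_lt _ hk⟩) 1 := by
          simp only [wcl]
          rw [if_pos (show (0:ℕ) + (k+m-1) < k by omega)]
        rw [hw, F4H_single]
        simp only [wfin]
        rw [if_neg h0, if_pos (show (i:ℕ) + m < k by omega)]
        rw [show (⟨(0+(k+m-1)) % k, Nat.mod_lt _ hk⟩ : Fin k)
          = ⟨((i:ℕ)+m) % k, Nat.mod_lt _ hk⟩ from mk_mod_congr k hk (by omega)]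
      · have hw : wcl k hk εs (k+m-1) ⟨0, hk⟩
            = gvec (εs ⟨(0+(k+m-1)) % k, Nat.mod_lt _ hk⟩) := by
          simp only [wcl]
          rw [if_neg (show ¬((0:ℕ) + (k+m-1) < k) by omega), if_pos trivial]
        rw [hw]
        simp only [wfin]
        rw [if_neg h0, if_neg (show ¬((i:ℕ) + m < k) by omega)]
        rw [show (⟨(0+(k+m-1)) % k, Nat.mod_lt _ hk⟩ : Fin k)
          = ⟨((i:ℕ)+m) % k, Nat.mod_lt _ hk⟩ from mk_mod_congr k hk (by omega)]

lemma sum_sq_wfin (k : ℕ) (hk : 0 < k) (εs : Fin k → Fin 4) (m : ℕ) (hm : m ≤ k - 1) :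
    ∑ j : Fin (4^k), ‖tens4 k (wfin k hk εs m) j‖ ^ 2 = 1 / (4 * 2^m) := by
  rw [sum_sq_tens4]
  have hslot : ∀ i : Fin k, (∑ a : Fin 4, ‖wfin k hk εs m i a‖ ^ 2)
      = (fun n : ℕ => if n = 0 then (1/4 : ℝ) else if n + m < k then 1 else 1/2) (i:ℕ) := by
    intro i
    simp only [wfin]
    by_cases h0 : (i:ℕ) = 0
    · simp only [h0, if_pos]
      exact sum_sq_p3_fvec _
    · simp only [if_neg h0]
      by_cases hc : (i:ℕ) + m < k
      · simp only [if_pos hc]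
        exact sum_sq_fvec _
      · simp only [if_neg hc]
        exact sum_sq_F4H_gvec _
  rw [Finset.prod_congr rfl (fun i _ => hslot i)]
  rw [Fin.prod_univ_eq_prod_range (fun n : ℕ => if n = 0 then (1/4:ℝ) else if n + m < k then 1 else 1/2) k]
  rw [Finset.range_eq_Ico]
  rw [← Finset.prod_Ico_consecutive _ (show 0 ≤ 1 by omega) (show 1 ≤ k by omega)]
  rw [← Finset.prod_Ico_consecutive _ (show 1 ≤ k - m by omega) (show k - m ≤ k by omega)]
  have h1 : (∏ n ∈ Finset.Ico 0 1, (if n = 0 then (1/4:ℝ) else if n + m < k then 1 else 1/2)) = 1/4 := by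
    rw [show Finset.Ico 0 1 = {0} from rfl]
    simp
  have h2 : (∏ n ∈ Finset.Ico 1 (k-m), (if n = 0 then (1/4:ℝ) else if n + m < k then 1 else 1/2)) = 1 := by
    apply Finset.prod_eq_one
    intro x hx
    rw [Finset.mem_Ico] at hx
    rw [if_neg (by omega), if_pos (by omega)]
  have h3 : (∏ n ∈ Finset.Ico (k-m) k, (if n = 0 then (1/4:ℝ) else if n + m < k then 1 else 1/2)) = (1/2)^m := by
    have hc : ∀ x ∈ Finset.Ico (k-m) k,
        (if x = 0 then (1/4:ℝ) else if x + m < k then 1 else 1/2) = 1/2 := by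
      intro x hx
      rw [Finset.mem_Ico] at hx
      rw [if_neg (by omega), if_neg (by omega)]
    rw [Finset.prod_congr rfl hc, Finset.prod_const, Nat.card_Ico]
    congr 1
    omega
  rw [h1, h2, h3, one_mul, div_pow, one_pow, div_mul_div_comm, one_mul]

theorem stmt18 (k : ℕ) (hk : 1 ≤ k)
    (U : Matrix (Fin (4 ^ k)) (Fin (4 ^ k)) ℂ)
    -- U is the Walsh quantization: it shifts the qu4its, applying F₄* to the first one
    (hU : ∀ v : Fin k → Fin 4 → ℂ,
      U.mulVec (tens4 k v)
        = tens4 k (fun i =>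
            if h : i.val + 1 < k then v ⟨i.val + 1, h⟩
            else F4.conjTranspose.mulVec (v ⟨0, i.pos⟩)))
    (εs : Fin k → Fin 4) (hε0 : εs ⟨0, hk⟩ = 0)
    -- ε is a nonclassical state: ε_ℓ ∈ {1, 2} for all 2 ≤ ℓ ≤ k
    (hnc : ∀ ℓ : ℕ, ∀ _h1 : 2 ≤ ℓ, ∀ _h2 : ℓ ≤ k,
      εs ⟨ℓ - 1, by omega⟩ = 1 ∨ εs ⟨ℓ - 1, by omega⟩ = 2) :
    -- t_n |ε⟩ = 0 for all 1 ≤ n ≤ k - 1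
    (∀ n : ℕ, 1 ≤ n → n ≤ k - 1 →
      (projDigit k {3} * U * (projDigit k {1, 2} * U) ^ (n - 1)
        * projDigit k {0}).mulVec (tens4 k (fun i => Pi.single (εs i) 1)) = 0) ∧
    -- ‖t_{k+m} |ε⟩‖² = 1/(4·2^m) for all 0 ≤ m ≤ k - 1
    (∀ m : ℕ, m ≤ k - 1 →
      ∑ j : Fin (4 ^ k),
        ‖(((projDigit k {3} * U * (projDigit k {1, 2} * U) ^ (k + m - 1)
            * projDigit k {0}).mulVec (tens4 k (fun i => Pi.single (εs i) 1))) j)‖ ^ 2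
        = 1 / (4 * 2 ^ m)) := by
  have hk0 : 0 < k := hk
  have hnc' : ∀ ℓ : ℕ, 2 ≤ ℓ → ∀ h2 : ℓ ≤ k,
      εs ⟨ℓ - 1, by omega⟩ = 1 ∨ εs ⟨ℓ - 1, by omega⟩ = 2 := fun ℓ h1 h2 => hnc ℓ h1 h2
  have hU' : ∀ v : Fin k → Fin 4 → ℂ,
      U.mulVec (tens4 k v) = tens4 k (shiftv k v) := fun v => hU v
  have hpow : ∀ r : ℕ, r ≤ 2*k - 2 →
      ((projDigit k {1,2} * U) ^ r).mulVec (tens4 k (wcl k hk0 εs 0))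
        = tens4 k (wcl k hk0 εs r) := by
    intro r
    induction r with
    | zero => intro _; rw [pow_zero, Matrix.one_mulVec]
    | succ r ih =>
      intro hr
      rw [pow_succ', ← Matrix.mulVec_mulVec, ih (by omega), ← Matrix.mulVec_mulVec,
        hU', projDigit_mulVec k hk, wcl_step k hk0 εs hnc' r hr]
  have hstate : ∀ r : ℕ, r ≤ 2*k - 2 →
      (projDigit k {3} * U * (projDigit k {1,2} * U) ^ r
        * projDigit k {0}).mulVec (tens4 k (fun i => Pi.single (εs i) 1))
      = tens4 k (projv k {3} (shiftv k (wcl k hk0 εs r))) := by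
    intro r hr
    rw [← Matrix.mulVec_mulVec, ← Matrix.mulVec_mulVec, ← Matrix.mulVec_mulVec,
      projDigit_mulVec k hk, wcl_base k hk0 εs hε0, hpow r hr, hU', projDigit_mulVec k hk]
  constructor
  · -- part 1
    intro n h1 h2
    rw [hstate (n-1) (by omega)]
    apply tens4_zero k hk0
    have h1k : (0:ℕ) + 1 < k := by omega
    have hsh : shiftv k (wcl k hk0 εs (n-1)) ⟨0, hk0⟩
        = wcl k hk0 εs (n-1) ⟨1, by omega⟩ := by
      simp only [shiftv]
      rw [dif_pos (show ((⟨0, hk0⟩ : Fin k) : ℕ) + 1 < k from h1k)]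
    have hw : wcl k hk0 εs (n-1) ⟨1, by omega⟩
        = Pi.single (εs ⟨(1+(n-1)) % k, Nat.mod_lt _ hk0⟩) 1 := by
      simp only [wcl]
      rw [if_pos (show (1:ℕ) + (n-1) < k by omega)]
    have hval : εs ⟨(1+(n-1)) % k, Nat.mod_lt _ hk0⟩ = 1
        ∨ εs ⟨(1+(n-1)) % k, Nat.mod_lt _ hk0⟩ = 2 := by
      have h := hnc' (n+1) (by omega) (by omega)
      have he : (⟨(1+(n-1)) % k, Nat.mod_lt _ hk0⟩ : Fin k) = ⟨n+1-1, by omega⟩ := by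
        apply Fin.ext
        show (1+(n-1)) % k = n+1-1
        rw [Nat.mod_eq_of_lt (by omega)]
        omega
      rw [he]
      exact h
    show projv k {3} (shiftv k (wcl k hk0 εs (n-1))) ⟨0, hk0⟩ = 0
    simp only [projv]
    rw [if_pos trivial, hsh, hw, proj3_single hval]
  · -- part 2
    intro m hm
    rw [hstate (k+m-1) (by omega), wfin_eq k hk0 εs m hm]
    exact sum_sq_wfin k hk0 εs m hm
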